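/- Horizontal associativity for curried function composition: for α : arr c d, β : arr a cᵢ, γ : arr b cⱼ, with i < j < |c|, |a| = ℓ ≥ 1, cᵢ and cⱼ the i-th and j-th entries of c respectively, one has (α ∘ᵢ β) ∘_{ℓ-1+j} γ = (α ∘ⱼ γ) ∘ᵢ β, after casting along the list equality (c •ᵢ a) •_{ℓ-1+j} b = (c •ⱼ b) •ᵢ a. -/

import Mathlib

def splice {T : Type*} (cl bl : List T) (k : ℕ) : List T :=
  cl.take k ++ bl ++ cl.drop (k+1)

def arr : List Type → Type → Type
  | [], d => d
  | t :: ts, d => t → arr ts d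

def mapArr {t t' : Type} (f : t → t') : ∀ {bl : List Type}, arr bl t → arr bl t'
  | [], g => f g
  | _ :: _, g => fun y => mapArr f (g y)

def compose : ∀ {cl bl : List Type} {t t' : Type},
    arr cl (t → t') → arr bl t → arr cl (arr bl t')
  | [], _, _, _, f, g => mapArr f g
  | _ :: _, _, _, _, f, g => fun x => compose (f x) g

theorem list_split {T : Type*} (cl : List T) (i : ℕ) (h : i < cl.length) :
    cl.take i ++ cl[i] :: cl.drop (i+1) = cl := by
  conv_rhs => rw [← List.take_append_drop i cl, List.drop_eq_getElem_cons h]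

theorem arr_append (l1 l2 : List Type) (d : Type) :
    arr (l1 ++ l2) d = arr l1 (arr l2 d) := by
  induction l1 with
  | nil => rfl
  | cons t ts ih => exact congrArg (fun X => t → X) ih

theorem arr_eq_split (cl : List Type) (d : Type) (i : ℕ) (hi : i < cl.length) :
    arr cl d = arr (cl.take i) (cl[i] → arr (cl.drop (i+1)) d) := by
  conv_lhs => rw [← list_split cl i hi]
  rw [arr_append]
  rfl

theorem arr_splice_eq (cl bl : List Type) (d : Type) (i : ℕ) :
    arr (splice cl bl i) d = arr (cl.take i) (arr bl (arr (cl.drop (i+1)) d)) := by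
  simp [splice, arr_append]

def ocomp {cl bl : List Type} {d ci : Type} (i : ℕ) (hi : i < cl.length)
    (hci : cl[i] = ci) (α : arr cl d) (β : arr bl ci) : arr (splice cl bl i) d :=
  cast (arr_splice_eq cl bl d i).symm
    (compose (cast (by rw [arr_eq_split cl d i hi, hci]) α) β)

/-! ## Toolkit -/

def prodL : List Type → Type
  | [] => PUnit
  | t :: ts => t × prodL ts

def appAll : ∀ {cl : List Type} {d : Type}, arr cl d → prodL cl → d
  | [], _, f, _ => f
  | _ :: _, _, f, x => appAll (f x.1) x.2

def catP : ∀ {l1 l2 : List Type}, prodL l1 → prodL l2 → prodL (l1 ++ l2)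
  | [], _, _, y => y
  | _ :: _, _, x, y => (x.1, catP x.2 y)

def splitP : ∀ {l1 l2 : List Type}, prodL (l1 ++ l2) → prodL l1 × prodL l2
  | [], _, p => (PUnit.unit, p)
  | _ :: _, _, p => ((p.1, (splitP p.2).1), (splitP p.2).2)

def castP {L L' : List Type} (h : L = L') (p : prodL L) : prodL L' :=
  cast (congrArg prodL h) p

def consP {t : Type} {L : List Type} (v : t) (p : prodL L) : prodL (t :: L) :=
  (v, p)

theorem consP_heq {t t' : Type} {L L' : List Type} (h1 : t = t') (h2 : L = L')
    {v : t} {v' : t'} {p : prodL L} {p' : prodL L'}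
    (hv : HEq v v') (hp : HEq p p') : HEq (consP v p) (consP v' p') := by
  subst h1; subst h2; cases hv; cases hp; rfl

theorem catP_splitP : ∀ {l1 l2 : List Type} (p : prodL (l1 ++ l2)),
    catP (splitP (l1 := l1) p).1 (splitP p).2 = p
  | [], _, _ => rfl
  | _ :: _, l2, p => by
    show (p.1, catP (splitP p.2).1 (splitP p.2).2) = p
    rw [catP_splitP]
    rfl

theorem appAll_inj : ∀ {cl : List Type} {d : Type} {f g : arr cl d},
    (∀ xs, appAll f xs = appAll g xs) → f = g := by
  intro cl
  induction cl with
  | nil => intro d f g h; exact h PUnit.unit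
  | cons t ts ih =>
    intro d f g h
    funext x
    exact ih fun xs => h (x, xs)

theorem appAll_mapArr {t t' : Type} (f : t → t') :
    ∀ {bl : List Type} (g : arr bl t) (y : prodL bl),
    appAll (mapArr f g) y = f (appAll g y)
  | [], g, _ => rfl
  | _ :: _, g, y => appAll_mapArr f (g y.1) y.2

theorem appAll_compose : ∀ {C B : List Type} {t t' : Type}
    (f : arr C (t → t')) (g : arr B t) (x : prodL C) (y : prodL B),
    appAll (appAll (compose f g) x) y = appAll f x (appAll g y)
  | [], _, _, _, f, g, _, y => appAll_mapArr f g y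
  | _ :: _, _, _, _, f, g, x, y => appAll_compose (f x.1) g x.2 y

theorem cast_app {t X Y : Type} (h : X = Y) (h2 : (t → X) = (t → Y))
    (f : t → X) (a : t) : cast h2 f a = cast h (f a) := by
  subst h; rw [cast_eq, cast_eq]

theorem appAll_cat : ∀ {l1 l2 : List Type} {d : Type}
    (H : arr (l1 ++ l2) d = arr l1 (arr l2 d)) (f : arr (l1 ++ l2) d)
    (x : prodL l1) (y : prodL l2),
    appAll f (catP x y) = appAll (appAll (cast H f) x) y
  | [], l2, d, H, f, _, y => by exact (congrArg (fun g => appAll g y) (cast_eq H f)).symm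
  | t :: ts, l2, d, H, f, x, y => by
    show appAll (f x.1) (catP x.2 y) = appAll (appAll (cast H f x.1) x.2) y
    exact (appAll_cat (arr_append ts l2 d) (f x.1) x.2 y).trans
      (congrArg (fun g => appAll (appAll g x.2) y) (cast_app (arr_append ts l2 d) H f x.1).symm)

theorem appAll_castArr {L L' : List Type} {d : Type} (h : L = L')
    (f : arr L d) (xs : prodL L') :
    appAll (cast (congrArg (fun l => arr l d) h) f) xs
      = appAll f (castP h.symm xs) := by
  subst h; rfl

theorem castP_heq {L L' : List Type} (h : L = L') (p : prodL L) :
    HEq (castP h p) p := cast_heq _ p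

theorem pair_heq {α α' β β' : Type} (h1 : α = α') (h2 : β = β')
    {a : α} {a' : α'} {b : β} {b' : β'} (ha : HEq a a') (hb : HEq b b') :
    HEq ((a, b) : α × β) ((a', b') : α' × β') := by
  subst h1; subst h2; cases ha; cases hb; rfl

theorem catP_heq {l1 l1' l2 l2' : List Type} (h1 : l1 = l1') (h2 : l2 = l2')
    {x : prodL l1} {x' : prodL l1'} {y : prodL l2} {y' : prodL l2'}
    (hx : HEq x x') (hy : HEq y y') : HEq (catP x y) (catP x' y') := by
  subst h1; subst h2; cases hx; cases hy; rfl

theorem catP_assoc_heq : ∀ {l1 l2 l3 : List Type}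
    (x : prodL l1) (y : prodL l2) (z : prodL l3),
    HEq (catP (catP x y) z) (catP x (catP y z))
  | [], _, _, _, _, _ => HEq.rfl
  | t :: ts, l2, l3, x, y, z => by
    show HEq ((x.1, catP (catP x.2 y) z)) ((x.1, catP x.2 (catP y z)))
    exact pair_heq rfl (congrArg prodL (List.append_assoc ts l2 l3))
      HEq.rfl (catP_assoc_heq x.2 y z)

theorem appAll_cast3 {T B D : List Type} {d : Type}
    (H : arr ((T ++ B) ++ D) d = arr T (arr B (arr D d)))
    (f : arr ((T ++ B) ++ D) d) (x : prodL T) (y : prodL B) (z : prodL D) :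
    appAll f (catP (catP x y) z) = appAll (appAll (appAll (cast H f) x) y) z := by
  rw [appAll_cat (arr_append (T ++ B) D d) f (catP x y) z,
      appAll_cat (arr_append T B (arr D d)) _ x y]
  have : cast (arr_append T B (arr D d)) (cast (arr_append (T ++ B) D d) f)
      = cast H f := by rw [cast_cast]
  rw [this]

theorem appAll_split {T D : List Type} {t d : Type} {cl : List Type}
    (h : T ++ t :: D = cl) (H : arr cl d = arr T (t → arr D d))
    (α : arr cl d) (x : prodL T) (v : t) (z : prodL D) :
    appAll (appAll (cast H α) x v) z
      = appAll α (castP h (catP x ((v, z) : prodL (t :: D)))) := by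
  subst h
  simp only [castP]
  rw [cast_eq]
  rw [appAll_cat H α x ((v, z) : prodL (t :: D))]
  rfl

theorem appAll_ocomp {cl bl : List Type} {d ci : Type} (i : ℕ)
    (hi : i < cl.length) (hci : cl[i] = ci) (α : arr cl d) (β : arr bl ci)
    (x : prodL (cl.take i)) (y : prodL bl) (z : prodL (cl.drop (i+1))) :
    appAll (ocomp i hi hci α β) (catP (catP x y) z)
      = appAll α (castP (list_split cl i hi)
          (catP x ((cast hci.symm (appAll β y), z) : prodL (cl[i] :: cl.drop (i+1))))) := by
  subst hci
  unfold ocomp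
  refine (appAll_cast3 (arr_splice_eq cl bl d i) _ x y z).trans ?_
  refine (congrArg (fun g => appAll (appAll (appAll g x) y) z)
    (show cast (arr_splice_eq cl bl d i) (cast (arr_splice_eq cl bl d i).symm
        (compose (cast (by rw [arr_eq_split cl d i hi]) α) β))
      = compose (cast (arr_eq_split cl d i hi) α) β by rw [cast_cast, cast_eq])).trans ?_
  rw [appAll_compose]
  rw [appAll_split (list_split cl i hi) (arr_eq_split cl d i hi) α x _ z]
  simp only [cast_eq]

theorem horizontal_assoc_ocomp {cl al bl : List Type} {d : Type} {i j ℓ : ℕ}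
    (hij : i < j) (hj : j < cl.length) (hl : al.length = ℓ) (hl1 : 1 ≤ ℓ)
    (h1 : ℓ - 1 + j < (splice cl al i).length)
    (h2 : (splice cl al i)[ℓ - 1 + j] = cl[j])
    (h3 : i < (splice cl bl j).length)
    (h4 : (splice cl bl j)[i] = cl[i]'(lt_trans hij hj))
    (hle : splice (splice cl al i) bl (ℓ - 1 + j) = splice (splice cl bl j) al i)
    (α : arr cl d) (β : arr al (cl[i]'(lt_trans hij hj))) (γ : arr bl cl[j]) :
    cast (congrArg (fun l => arr l d) hle)
      (ocomp (ℓ - 1 + j) h1 h2 (ocomp i (lt_trans hij hj) rfl α β) γ) =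
    ocomp i h3 h4 (ocomp j hj rfl α γ) β := by
  subst hl
  have hi : i < cl.length := lt_trans hij hj
  have e1 : (splice cl bl j).take i = cl.take i := by
    simp only [splice, List.take_append, List.length_take,
      min_eq_left hj.le, List.take_take, min_eq_left hij.le,
      Nat.sub_eq_zero_of_le hij.le, List.take_zero, Nat.zero_sub, List.nil_append,
      List.append_nil]
    rw [List.length_append, List.length_take, min_eq_left hj.le,
      Nat.sub_eq_zero_of_le (le_trans hij.le (Nat.le_add_right _ _)),
      List.take_zero, List.append_nil]
  have e2 : (splice cl bl j).drop (i+1)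
      = ((cl.take j).drop (i+1) ++ bl) ++ cl.drop (j+1) := by
    simp only [splice, List.drop_append, List.length_take,
      min_eq_left hj.le, Nat.sub_eq_zero_of_le hij, List.drop_zero, Nat.zero_sub,
      Nat.add_zero, List.append_assoc]
  have e3 : cl.take j = cl.take i ++ cl[i] :: (cl.take j).drop (i+1) := by
    have h' : i < (cl.take j).length := by simp [List.length_take]; omega
    have h'' := list_split (cl.take j) i h'
    rw [List.take_take, min_eq_left hij.le, List.getElem_take] at h''
    exact h''.symm
  have e4 : cl.drop (i+1) = (cl.take j).drop (i+1) ++ cl[j] :: cl.drop (j+1) := by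
    conv_lhs => rw [← List.take_append_drop j cl]
    rw [List.drop_append, List.drop_eq_getElem_cons hj]
    simp only [List.length_take, min_eq_left hj.le, Nat.sub_eq_zero_of_le hij,
      List.drop_zero]
  have e5 : (splice cl al i).take (al.length - 1 + j)
      = (cl.take i ++ al) ++ (cl.take j).drop (i+1) := by
    rw [splice, List.take_append,
      List.take_of_length_le (by simp [List.length_take, min_eq_left hi.le]; omega),
      List.drop_take]
    congr 2
    simp [List.length_take, min_eq_left hi.le]
    omega
  have e6 : (splice cl al i).drop (al.length - 1 + j + 1) = cl.drop (j+1) := by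
    rw [splice, List.drop_append,
      List.drop_of_length_le (by simp [List.length_take, min_eq_left hi.le]; omega),
      List.nil_append, List.drop_drop]
    congr 1
    simp [List.length_take, min_eq_left hi.le]
    omega
  apply appAll_inj
  intro xs
  -- decompose xs into pieces
  set p1 := splitP (l1 := (splice cl bl j).take i ++ al)
    (l2 := (splice cl bl j).drop (i+1)) xs with hp1
  set x' := (splitP p1.1).1 with hx'
  set a := (splitP p1.1).2 with ha
  set z' := p1.2 with hz'
  have hxs : xs = catP (catP x' a) z' := by
    rw [hx', ha, hz', catP_splitP, hp1]
    exact (catP_splitP xs).symm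
  set z'' := castP e2 z' with hz''
  set p2 := splitP (l1 := (cl.take j).drop (i+1) ++ bl)
    (l2 := cl.drop (j+1)) z'' with hp2
  set m := (splitP p2.1).1 with hm
  set b := (splitP p2.1).2 with hb
  set q := p2.2 with hq
  have hz''eq : z'' = catP (catP m b) q := by
    rw [hm, hb, hq, catP_splitP, hp2, catP_splitP]
  have hz'heq : HEq z' (catP (catP m b) q) := by
    rw [← hz''eq]
    exact (castP_heq e2 z').symm
  set x := castP e1 x' with hx
  have hx'heq : HEq x' x := (castP_heq e1 x').symm
  set u := castP e5.symm (catP (catP x a) m) with hu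
  set q2 := castP e6.symm q with hq2
  set xj := castP e3.symm (catP x (consP (appAll β a) m)) with hxj
  set zD := castP e4.symm (catP m (consP (appAll γ b) q)) with hzD
  -- the intermediate argument equalities
  have hys : castP hle.symm xs = catP (catP u b) q2 := by
    apply eq_of_heq
    have sideA : HEq (castP hle.symm xs)
        (catP (catP x a) (catP m (catP b q))) := by
      refine ((castP_heq hle.symm xs).trans (heq_of_eq hxs)).trans ?_
      refine catP_heq (by rw [e1]) (by rw [e2, List.append_assoc])
        (catP_heq e1 rfl hx'heq HEq.rfl) ?_
      exact hz'heq.trans (catP_assoc_heq m b q)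
    have sideB : HEq (catP (catP u b) q2)
        (catP (catP x a) (catP m (catP b q))) := by
      refine HEq.trans ?_ ((catP_assoc_heq (catP (catP x a) m) b q).trans
        (catP_assoc_heq (catP x a) m (catP b q)))
      exact catP_heq (by rw [e5]) e6 (catP_heq e5 rfl (castP_heq e5.symm _) HEq.rfl)
        (castP_heq e6.symm q)
    exact sideA.trans sideB.symm
  have hargL : castP (list_split (splice cl al i) (al.length - 1 + j) h1)
      (catP u (consP (cast h2.symm (appAll γ b)) q2))
      = catP (catP x a) zD := by
    apply eq_of_heq
    have sideA : HEq (castP (list_split (splice cl al i) (al.length - 1 + j) h1)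
        (catP u (consP (cast h2.symm (appAll γ b)) q2)))
        (catP (catP x a) (catP m (consP (appAll γ b) q))) := by
      refine (castP_heq _ _).trans ?_
      refine HEq.trans ?_ (catP_assoc_heq (catP x a) m (consP (appAll γ b) q))
      exact catP_heq e5 (by rw [h2, e6]) (castP_heq e5.symm _)
        (consP_heq h2 e6 (cast_heq _ _) (castP_heq e6.symm q))
    have sideB : HEq (catP (catP x a) zD)
        (catP (catP x a) (catP m (consP (appAll γ b) q))) := by
      exact catP_heq rfl e4 HEq.rfl (castP_heq e4.symm _)
    exact sideA.trans sideB.symm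
  have hargR : castP (list_split (splice cl bl j) i h3)
      (catP x' (consP (cast h4.symm (appAll β a)) z'))
      = catP (catP xj b) q := by
    apply eq_of_heq
    have sideA : HEq (castP (list_split (splice cl bl j) i h3)
        (catP x' (consP (cast h4.symm (appAll β a)) z')))
        (catP x (consP (appAll β a) (catP m (catP b q)))) := by
      refine (castP_heq _ _).trans ?_
      refine catP_heq e1 (by rw [h4, e2, List.append_assoc]) hx'heq ?_
      exact consP_heq h4 (by rw [e2, List.append_assoc])
        (cast_heq _ _) (hz'heq.trans (catP_assoc_heq m b q))
    have sideB : HEq (catP (catP xj b) q)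
        (catP x (consP (appAll β a) (catP m (catP b q)))) := by
      refine HEq.trans ?_ ((catP_assoc_heq (catP x (consP (appAll β a) m)) b q).trans
        (catP_assoc_heq x (consP (appAll β a) m) (catP b q)))
      exact catP_heq (congrArg (fun l => l ++ bl) e3) rfl
        (catP_heq e3 rfl (castP_heq e3.symm _) HEq.rfl) HEq.rfl
    exact sideA.trans sideB.symm
  have hfinal : castP (list_split cl i (lt_trans hij hj))
      (catP x (consP (cast (Eq.symm rfl) (appAll β a)) zD))
      = castP (list_split cl j hj)
        (catP xj (consP (cast (Eq.symm rfl) (appAll γ b)) q)) := by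
    apply eq_of_heq
    have sideA : HEq (castP (list_split cl i (lt_trans hij hj))
        (catP x (consP (cast (Eq.symm rfl) (appAll β a)) zD)))
        (catP x (consP (appAll β a) (catP m (consP (appAll γ b) q)))) := by
      refine (castP_heq _ _).trans ?_
      refine catP_heq rfl (by rw [e4]) HEq.rfl ?_
      exact consP_heq rfl e4 (cast_heq _ _) (castP_heq e4.symm _)
    have sideB : HEq (castP (list_split cl j hj)
        (catP xj (consP (cast (Eq.symm rfl) (appAll γ b)) q)))
        (catP x (consP (appAll β a) (catP m (consP (appAll γ b) q)))) := by
      refine (castP_heq _ _).trans ?_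
      refine HEq.trans ?_ (catP_assoc_heq x (consP (appAll β a) m)
        (consP (appAll γ b) q))
      exact catP_heq e3 rfl (castP_heq e3.symm _)
        (consP_heq rfl rfl (cast_heq _ _) HEq.rfl)
    exact sideA.trans sideB.symm
  -- main calculation
  calc appAll (cast (congrArg (fun l => arr l d) hle)
        (ocomp (al.length - 1 + j) h1 h2 (ocomp i (lt_trans hij hj) rfl α β) γ)) xs
      = appAll (ocomp (al.length - 1 + j) h1 h2 (ocomp i (lt_trans hij hj) rfl α β) γ)
          (castP hle.symm xs) := appAll_castArr hle _ xs
    _ = appAll (ocomp (al.length - 1 + j) h1 h2 (ocomp i (lt_trans hij hj) rfl α β) γ)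
          (catP (catP u b) q2) := congrArg _ hys
    _ = appAll (ocomp i (lt_trans hij hj) rfl α β)
          (castP (list_split (splice cl al i) (al.length - 1 + j) h1)
            (catP u (consP (cast h2.symm (appAll γ b)) q2))) :=
        appAll_ocomp (al.length - 1 + j) h1 h2 _ γ u b q2
    _ = appAll (ocomp i (lt_trans hij hj) rfl α β) (catP (catP x a) zD) :=
        congrArg _ hargL
    _ = appAll α (castP (list_split cl i (lt_trans hij hj))
          (catP x (consP (cast (Eq.symm rfl) (appAll β a)) zD))) :=
        appAll_ocomp i (lt_trans hij hj) rfl α β x a zD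
    _ = appAll α (castP (list_split cl j hj)
          (catP xj (consP (cast (Eq.symm rfl) (appAll γ b)) q))) :=
        congrArg _ hfinal
    _ = appAll (ocomp j hj rfl α γ) (catP (catP xj b) q) :=
        (appAll_ocomp j hj rfl α γ xj b q).symm
    _ = appAll (ocomp j hj rfl α γ)
          (castP (list_split (splice cl bl j) i h3)
            (catP x' (consP (cast h4.symm (appAll β a)) z'))) :=
        (congrArg _ hargR).symm
    _ = appAll (ocomp i h3 h4 (ocomp j hj rfl α γ) β) (catP (catP x' a) z') :=
        (appAll_ocomp i h3 h4 _ β x' a z').symm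
    _ = appAll (ocomp i h3 h4 (ocomp j hj rfl α γ) β) xs := congrArg _ hxs.symm
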